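/- For the traveling wave K of the model (with 0 < c_L < 1 < c_H, γ ∈ (0,1)), one has γ < K(ξ) < 1 for ξ ∈ (κ*, η*) and 0 < K(ξ) < γ for ξ > η*. -/

import Mathlib

open Real Set

set_option maxHeartbeats 1600000 in
theorem traveling_wave_value_bounds (cL cH γ η κ : ℝ)
    (hcL0 : 0 < cL) (hcL1 : cL < 1) (hcH : 1 < cH) (hγ0 : 0 < γ) (hγ1 : γ < 1)
    (Ψ : ℝ → ℝ)
    (hΨ : ∀ x, Ψ x = -(cL / (1 - cL)) * exp (-x) + (1 / (1 - cL)) * exp (-cL * x))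
    (hκη : κ < η) (hΨγ : Ψ (η - κ) = γ)
    (hη : exp (-η) = γ + (1 / (cH - 1)) * exp (-cL * (η - κ)))
    (K : ℝ → ℝ)
    (hKL : ∀ ξ ∈ Icc κ η,
      K ξ = -(cL / (1 - cL)) * exp (-(ξ - κ)) + (1 / (1 - cL)) * exp (-cL * (ξ - κ)))
    (hKH : ∀ ξ ∈ Ici η, K ξ = exp (-ξ) + (γ - exp (-η)) * exp (-cH * (ξ - η))) :
    (∀ ξ ∈ Ioo κ η, γ < K ξ ∧ K ξ < 1) ∧
    (∀ ξ ∈ Ioi η, 0 < K ξ ∧ K ξ < γ) := by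
  have h1cL : 0 < 1 - cL := by linarith
  have hcH1 : 0 < cH - 1 := by linarith
  have hd : 0 < η - κ := by linarith
  -- γ > exp(-cL (η-κ))
  have hγΨ : γ = -(cL / (1 - cL)) * exp (-(η - κ)) + (1 / (1 - cL)) * exp (-cL * (η - κ)) := by
    rw [← hΨγ, hΨ]
  have hexp_d : exp (-(η - κ)) < exp (-cL * (η - κ)) := by
    apply exp_lt_exp.mpr; nlinarith
  have hγgt : exp (-cL * (η - κ)) < γ := by
    have h : (1 - cL) * γ = exp (-cL * (η - κ)) - cL * exp (-(η - κ)) := by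
      rw [hγΨ]; field_simp; ring
    nlinarith
  set A := exp (-η) - γ with hA_def
  have hAeq : (cH - 1) * A = exp (-cL * (η - κ)) := by
    rw [hA_def, hη]; field_simp; ring
  have hA0 : 0 < A := by nlinarith [exp_pos (-cL * (η - κ))]
  have hcHA : cH * A < exp (-η) := by nlinarith
  -- Ψ is strictly decreasing on [0,∞)
  have hΨfun : Ψ = fun y => -(cL / (1 - cL)) * exp (-y) + (1 / (1 - cL)) * exp (-cL * y) :=
    funext hΨ
  have hΨderiv : ∀ x : ℝ, HasDerivAt Ψ (cL / (1 - cL) * (exp (-x) - exp (-cL * x))) x := by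
    intro x
    have h1 : HasDerivAt (fun y : ℝ => exp (-y)) (-exp (-x)) x := by
      simpa using ((hasDerivAt_id x).neg).exp
    have h2 : HasDerivAt (fun y : ℝ => exp (-cL * y)) (-cL * exp (-cL * x)) x := by
      have := (((hasDerivAt_id x).const_mul (-cL))).exp
      simpa [mul_comm] using this
    have h := (h1.const_mul (-(cL / (1 - cL)))).add (h2.const_mul (1 / (1 - cL)))
    rw [hΨfun]
    refine h.congr_deriv ?_
    ring
  have hΨanti : StrictAntiOn Ψ (Ici (0 : ℝ)) := by
    apply strictAntiOn_of_deriv_neg (convex_Ici 0)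
    · rw [hΨfun]; fun_prop
    · intro x hx
      rw [interior_Ici] at hx
      rw [(hΨderiv x).deriv]
      have hx' : 0 < x := hx
      have h1 : exp (-x) < exp (-cL * x) := by apply exp_lt_exp.mpr; nlinarith
      have h2 : 0 < cL / (1 - cL) := by positivity
      nlinarith
  have hΨ0 : Ψ 0 = 1 := by
    rw [hΨ]; simp; field_simp; ring
  constructor
  · intro ξ hξ
    have hKξ : K ξ = Ψ (ξ - κ) := by
      rw [hKL ξ ⟨le_of_lt hξ.1, le_of_lt hξ.2⟩, hΨ]
    constructor
    · rw [hKξ, ← hΨγ]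
      exact hΨanti (mem_Ici.mpr (by linarith [hξ.1])) (mem_Ici.mpr (by linarith [hξ.2]))
        (by linarith [hξ.2])
    · rw [hKξ, ← hΨ0]
      exact hΨanti (mem_Ici.mpr le_rfl) (mem_Ici.mpr (by linarith [hξ.1]))
        (by linarith [hξ.1])
  · intro ξ hξ
    have hξη : η < ξ := hξ
    have hKξ := hKH ξ (le_of_lt hξη)
    have hs : 0 < ξ - η := by linarith
    have he1 : exp (-cH * (ξ - η)) < exp (-(ξ - η)) := by
      apply exp_lt_exp.mpr; nlinarith
    have he2 : exp (-η) * exp (-(ξ - η)) = exp (-ξ) := by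
      rw [← exp_add]; ring_nf
    have hAlt : A < exp (-η) := by rw [hA_def]; linarith
    have hγA : γ - exp (-η) = -A := by rw [hA_def]; ring
    constructor
    · rw [hKξ, hγA]
      have hAe : A * exp (-cH * (ξ - η)) < exp (-ξ) := by
        nlinarith [mul_lt_mul_of_pos_left he1 hA0,
          mul_lt_mul_of_pos_right hAlt (exp_pos (-(ξ - η)))]
      nlinarith [hAe]
    · have hFderiv : ∀ x : ℝ,
          HasDerivAt (fun y : ℝ => exp (-y) + (γ - exp (-η)) * exp (-cH * (y - η)))
            (-exp (-x) + (γ - exp (-η)) * (-cH * exp (-cH * (x - η)))) x := by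
        intro x
        have h1 : HasDerivAt (fun y : ℝ => exp (-y)) (-exp (-x)) x := by
          simpa using ((hasDerivAt_id x).neg).exp
        have h2 : HasDerivAt (fun y : ℝ => exp (-cH * (y - η))) (-cH * exp (-cH * (x - η))) x := by
          have := (((hasDerivAt_id x).sub_const η).const_mul (-cH)).exp
          simpa [mul_comm] using this
        exact h1.add (h2.const_mul (γ - exp (-η)))
      have hFanti : StrictAntiOn
          (fun y : ℝ => exp (-y) + (γ - exp (-η)) * exp (-cH * (y - η))) (Ici η) := by
        apply strictAntiOn_of_deriv_neg (convex_Ici η)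
        · fun_prop
        · intro x hx
          rw [interior_Ici] at hx
          have hx' : η < x := hx
          rw [(hFderiv x).deriv, hγA]
          have hx1 : exp (-cH * (x - η)) < exp (-(x - η)) := by
            apply exp_lt_exp.mpr; nlinarith
          have hx2 : exp (-η) * exp (-(x - η)) = exp (-x) := by
            rw [← exp_add]; ring_nf
          have hcA : 0 < cH * A := by positivity
          nlinarith [mul_lt_mul_of_pos_left hx1 hcA,
            mul_lt_mul_of_pos_right hcHA (exp_pos (-(x - η)))]
      have hFη : (fun y : ℝ => exp (-y) + (γ - exp (-η)) * exp (-cH * (y - η))) η = γ := by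
        simp
      have hlt := hFanti (mem_Ici.mpr le_rfl) (mem_Ici.mpr (le_of_lt hξη)) hξη
      rw [hFη] at hlt
      rw [hKξ]
      exact hlt
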